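/- Let n ≥ 1 and let g : ℝ^n → (0, ∞) be a C¹ order function with structure constants (C, N), i.e. g(ρ₀ + ρ) ≤ C g(ρ₀) ⟨ρ⟩^N for all ρ₀, ρ. Suppose κ ≥ 0 is such that |∇g(ρ)| ≤ κ g(ρ) for all ρ ∈ ℝ^n. Then there exists a constant C' > 0, depending only on C, N and n (and not on κ or g), such that for every ρ₀ ∈ ℝ^n: | π^(−n/2) ∫_{ℝ^n} g(ρ₀ + ρ) e^(−|ρ|²) dρ − g(ρ₀) | ≤ C' κ g(ρ₀). -/

import Mathlib

open Real MeasureTheory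

noncomputable section

lemma aux_rpow_le_exp (s : ℝ) (hs : 0 ≤ s) :
    ∃ M > 0, ∀ x : ℝ, 0 ≤ x → (1 + x) ^ s ≤ M * Real.exp (x / 2) := by
  set k := ⌈s⌉₊ with hk
  refine ⟨2 ^ k * (Nat.factorial k) * Real.exp (1 / 2), by positivity, fun x hx => ?_⟩
  have h2 : (1 + x) ^ s ≤ (1 + x) ^ (k : ℝ) :=
    Real.rpow_le_rpow_of_exponent_le (by linarith) (Nat.le_ceil s)
  rw [Real.rpow_natCast] at h2
  have h3 : (1 + x) ^ k = 2 ^ k * ((1 + x) / 2) ^ k := by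
    rw [div_pow, ← mul_div_assoc, mul_comm]
    field_simp
  have h4 : ((1 + x) / 2) ^ k ≤ Real.exp ((1 + x) / 2) * (Nat.factorial k) := by
    have := Real.pow_div_factorial_le_exp (x := (1 + x) / 2) (by positivity) k
    rwa [div_le_iff₀ (by positivity : (0:ℝ) < (Nat.factorial k : ℝ))] at this
  have h5 : Real.exp ((1 + x) / 2) = Real.exp (1/2) * Real.exp (x/2) := by
    rw [← Real.exp_add]; ring_nf
  calc (1 + x) ^ s ≤ (1 + x) ^ k := h2
    _ = 2 ^ k * ((1 + x) / 2) ^ k := h3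
    _ ≤ 2 ^ k * (Real.exp ((1 + x) / 2) * (Nat.factorial k)) := by
        have : (0:ℝ) ≤ 2 ^ k := by positivity
        nlinarith
    _ = 2 ^ k * (Nat.factorial k) * Real.exp (1 / 2) * Real.exp (x / 2) := by
        rw [h5]; ring

lemma integrable_gauss (n : ℕ) {b : ℝ} (hb : 0 < b) :
    Integrable fun v : EuclideanSpace ℝ (Fin n) => Real.exp (-b * ‖v‖ ^ 2) := by
  have h := (GaussianFourier.integrable_cexp_neg_mul_sq_norm_add
      (V := EuclideanSpace ℝ (Fin n)) (b := (b : ℂ)) (by simpa using hb) 0 0).norm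
  refine h.congr (Filter.Eventually.of_forall fun v => ?_)
  show ‖Complex.exp _‖ = _
  rw [Complex.norm_exp]
  norm_num [← Complex.ofReal_pow]

lemma gauss_value (n : ℕ) :
    ∫ v : EuclideanSpace ℝ (Fin n), Real.exp (-‖v‖ ^ 2) = Real.pi ^ ((n : ℝ) / 2) := by
  have h := GaussianFourier.integral_rexp_neg_mul_sq_norm
      (V := EuclideanSpace ℝ (Fin n)) one_pos
  simp only [neg_mul, one_mul, div_one, finrank_euclideanSpace_fin] at h
  exact h

lemma integrable_rpow_gauss (n : ℕ) (s : ℝ) (hs : 0 ≤ s) :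
    Integrable fun ρ : EuclideanSpace ℝ (Fin n) =>
      (1 + ‖ρ‖ ^ 2) ^ s * Real.exp (-‖ρ‖ ^ 2) := by
  obtain ⟨M, hM, hMle⟩ := aux_rpow_le_exp s hs
  have hcont : Continuous fun ρ : EuclideanSpace ℝ (Fin n) =>
      (1 + ‖ρ‖ ^ 2) ^ s * Real.exp (-‖ρ‖ ^ 2) := by
    apply Continuous.mul
    · exact (continuous_const.add (continuous_norm.pow 2)).rpow_const fun x => Or.inr hs
    · exact Real.continuous_exp.comp (continuous_norm.pow 2).neg
  refine Integrable.mono' (((integrable_gauss n (b := 1/2) (by norm_num)).const_mul M))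
    hcont.aestronglyMeasurable (Filter.Eventually.of_forall fun ρ => ?_)
  have hx : (0:ℝ) ≤ ‖ρ‖ ^ 2 := by positivity
  rw [Real.norm_eq_abs, abs_of_nonneg (by positivity)]
  calc (1 + ‖ρ‖ ^ 2) ^ s * Real.exp (-‖ρ‖ ^ 2)
      ≤ M * Real.exp (‖ρ‖ ^ 2 / 2) * Real.exp (-‖ρ‖ ^ 2) :=
        mul_le_mul_of_nonneg_right (hMle _ hx) (Real.exp_nonneg _)
    _ = M * Real.exp (-(1/2) * ‖ρ‖ ^ 2) := by
        rw [mul_assoc, ← Real.exp_add]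
        congr 1
        ring

/-- First-order Taylor estimate against the normalized Gaussian: if `g` is a C¹ order
function with `|∇g| ≤ κ g`, then the Gaussian average of `g` equals `g(ρ₀)` up to a
relative error `C' κ`, with `C'` depending only on the structure constants and `n`. -/
theorem stmt_15 (n : ℕ) (hn : 1 ≤ n) (C N : ℝ) (hC : 0 < C) (hN : 0 ≤ N) :
    ∃ C' > 0, ∀ g : EuclideanSpace ℝ (Fin n) → ℝ, ContDiff ℝ 1 g → (∀ ρ, 0 < g ρ) →
      (∀ ρ₀ ρ, g (ρ₀ + ρ) ≤ C * g ρ₀ * (1 + ‖ρ‖ ^ 2) ^ (N / 2)) →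
      ∀ κ : ℝ, 0 ≤ κ → (∀ ρ, ‖gradient g ρ‖ ≤ κ * g ρ) →
      ∀ ρ₀, |Real.pi ^ (-(n : ℝ) / 2) * (∫ ρ, g (ρ₀ + ρ) * Real.exp (-‖ρ‖ ^ 2)) - g ρ₀| ≤
        C' * κ * g ρ₀ := by
  set E := EuclideanSpace ℝ (Fin n) with hE
  -- the weight function
  set w : E → ℝ := fun ρ => ‖ρ‖ * (1 + ‖ρ‖ ^ 2) ^ (N / 2) * Real.exp (-‖ρ‖ ^ 2) with hw
  have hw_nonneg : ∀ ρ, 0 ≤ w ρ := fun ρ => by positivity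
  have hw_le : ∀ ρ : E, w ρ ≤ (1 + ‖ρ‖ ^ 2) ^ ((N + 1) / 2) * Real.exp (-‖ρ‖ ^ 2) := by
    intro ρ
    have h1 : ‖ρ‖ ≤ (1 + ‖ρ‖ ^ 2) ^ ((1:ℝ)/2) :=
      calc ‖ρ‖ = (‖ρ‖ ^ 2) ^ ((1:ℝ)/2) := by
            rw [← Real.sqrt_eq_rpow, Real.sqrt_sq (norm_nonneg _)]
        _ ≤ (1 + ‖ρ‖ ^ 2) ^ ((1:ℝ)/2) :=
            Real.rpow_le_rpow (by positivity) (by linarith) (by norm_num)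
    have h2 : (1 + ‖ρ‖ ^ 2) ^ ((1:ℝ)/2) * (1 + ‖ρ‖ ^ 2) ^ (N / 2)
        = (1 + ‖ρ‖ ^ 2) ^ ((N + 1) / 2) := by
      rw [← Real.rpow_add (by positivity)]
      ring_nf
    calc ‖ρ‖ * (1 + ‖ρ‖ ^ 2) ^ (N / 2) * Real.exp (-‖ρ‖ ^ 2)
        ≤ (1 + ‖ρ‖ ^ 2) ^ ((1:ℝ)/2) * (1 + ‖ρ‖ ^ 2) ^ (N / 2) * Real.exp (-‖ρ‖ ^ 2) := by
          have hp : (0:ℝ) ≤ (1 + ‖ρ‖ ^ 2) ^ (N / 2) := by positivity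
          have he : (0:ℝ) ≤ Real.exp (-‖ρ‖ ^ 2) := Real.exp_nonneg _
          exact mul_le_mul_of_nonneg_right (mul_le_mul_of_nonneg_right h1 hp) he
      _ = (1 + ‖ρ‖ ^ 2) ^ ((N + 1) / 2) * Real.exp (-‖ρ‖ ^ 2) := by rw [h2]
  have hw_cont : Continuous w := by
    apply Continuous.mul
    · exact continuous_norm.mul
        ((continuous_const.add (continuous_norm.pow 2)).rpow_const fun x => Or.inr (by linarith))
    · exact Real.continuous_exp.comp (continuous_norm.pow 2).neg
  have hw_int : Integrable w := by
    refine Integrable.mono' (integrable_rpow_gauss n ((N + 1) / 2) (by linarith))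
      hw_cont.aestronglyMeasurable (Filter.Eventually.of_forall fun ρ => ?_)
    rw [Real.norm_eq_abs, abs_of_nonneg (hw_nonneg ρ)]
    exact hw_le ρ
  set I := ∫ ρ : E, w ρ with hI
  have hI_nonneg : 0 ≤ I := integral_nonneg hw_nonneg
  have hpi_pos : (0:ℝ) < Real.pi ^ (-(n : ℝ) / 2) := Real.rpow_pos_of_pos Real.pi_pos _
  refine ⟨C * Real.pi ^ (-(n : ℝ) / 2) * I + 1, by positivity, ?_⟩
  intro g hg hgpos horder κ hκ hgrad ρ₀
  have hgdiff : Differentiable ℝ g := hg.differentiable one_ne_zero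
  have hgcont : Continuous g := hg.continuous
  -- exponential integrability
  have hgauss1 : Integrable fun ρ : E => Real.exp (-‖ρ‖ ^ 2) := by
    have := integrable_gauss n (b := 1) one_pos
    simpa using this
  -- MVT bound
  have key : ∀ ρ : E, |g (ρ₀ + ρ) - g ρ₀| ≤ κ * (C * g ρ₀ * (1 + ‖ρ‖ ^ 2) ^ (N / 2)) * ‖ρ‖ := by
    intro ρ
    have hconv : Convex ℝ (segment ℝ ρ₀ (ρ₀ + ρ)) := convex_segment _ _
    have hbound : ∀ x ∈ segment ℝ ρ₀ (ρ₀ + ρ),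
        ‖fderiv ℝ g x‖ ≤ κ * (C * g ρ₀ * (1 + ‖ρ‖ ^ 2) ^ (N / 2)) := by
      intro x hx
      rw [segment_eq_image'] at hx
      obtain ⟨t, ht, rfl⟩ := hx
      rw [add_sub_cancel_left]
      have hts : ‖t • ρ‖ ≤ ‖ρ‖ := by
        rw [norm_smul, Real.norm_eq_abs]
        calc |t| * ‖ρ‖ ≤ 1 * ‖ρ‖ :=
          mul_le_mul_of_nonneg_right (abs_le.2 ⟨by linarith [ht.1], ht.2⟩) (norm_nonneg _)
        _ = ‖ρ‖ := one_mul _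
      have hfd : ‖fderiv ℝ g (ρ₀ + t • ρ)‖ = ‖gradient g (ρ₀ + t • ρ)‖ :=
        (LinearIsometryEquiv.norm_map (InnerProductSpace.toDual ℝ E).symm _).symm
      rw [hfd]
      calc ‖gradient g (ρ₀ + t • ρ)‖ ≤ κ * g (ρ₀ + t • ρ) := hgrad _
        _ ≤ κ * (C * g ρ₀ * (1 + ‖t • ρ‖ ^ 2) ^ (N / 2)) :=
            mul_le_mul_of_nonneg_left (horder ρ₀ (t • ρ)) hκ
        _ ≤ κ * (C * g ρ₀ * (1 + ‖ρ‖ ^ 2) ^ (N / 2)) := by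
            apply mul_le_mul_of_nonneg_left _ hκ
            apply mul_le_mul_of_nonneg_left _ (mul_nonneg hC.le (hgpos ρ₀).le)
            exact Real.rpow_le_rpow (by positivity) (by nlinarith [norm_nonneg (t • ρ)])
              (by linarith)
    have := hconv.norm_image_sub_le_of_norm_fderiv_le (fun x _ => hgdiff x) hbound
      (left_mem_segment ℝ ρ₀ (ρ₀ + ρ)) (right_mem_segment ℝ ρ₀ (ρ₀ + ρ))
    simpa [add_sub_cancel_left, Real.norm_eq_abs] using this
  -- integrability of the main integrand
  have hintF : Integrable fun ρ : E => g (ρ₀ + ρ) * Real.exp (-‖ρ‖ ^ 2) := by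
    refine Integrable.mono' ((integrable_rpow_gauss n (N / 2) (by linarith)).const_mul
      (C * g ρ₀)) ((hgcont.comp (continuous_const.add continuous_id)).mul
        (Real.continuous_exp.comp (continuous_norm.pow 2).neg)).aestronglyMeasurable
      (Filter.Eventually.of_forall fun ρ => ?_)
    rw [Real.norm_eq_abs, abs_of_nonneg (mul_nonneg (hgpos _).le (Real.exp_nonneg _))]
    calc g (ρ₀ + ρ) * Real.exp (-‖ρ‖ ^ 2)
        ≤ C * g ρ₀ * (1 + ‖ρ‖ ^ 2) ^ (N / 2) * Real.exp (-‖ρ‖ ^ 2) :=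
          mul_le_mul_of_nonneg_right (horder ρ₀ ρ) (Real.exp_nonneg _)
      _ = C * g ρ₀ * ((1 + ‖ρ‖ ^ 2) ^ (N / 2) * Real.exp (-‖ρ‖ ^ 2)) := by ring
  have hint_const : Integrable fun ρ : E => g ρ₀ * Real.exp (-‖ρ‖ ^ 2) :=
    hgauss1.const_mul (g ρ₀)
  -- rewrite the difference
  have hpi : Real.pi ^ (-(n : ℝ) / 2) * Real.pi ^ ((n : ℝ) / 2) = 1 := by
    rw [← Real.rpow_add Real.pi_pos]
    norm_num [neg_div]
  have h2 : ∫ ρ : E, (g (ρ₀ + ρ) - g ρ₀) * Real.exp (-‖ρ‖ ^ 2)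
      = (∫ ρ : E, g (ρ₀ + ρ) * Real.exp (-‖ρ‖ ^ 2)) - g ρ₀ * Real.pi ^ ((n : ℝ) / 2) := by
    simp_rw [sub_mul]
    rw [integral_sub hintF hint_const, integral_const_mul, gauss_value n]
  have hsplit : Real.pi ^ (-(n : ℝ) / 2) * (∫ ρ : E, g (ρ₀ + ρ) * Real.exp (-‖ρ‖ ^ 2)) - g ρ₀
      = Real.pi ^ (-(n : ℝ) / 2) * ∫ ρ : E, (g (ρ₀ + ρ) - g ρ₀) * Real.exp (-‖ρ‖ ^ 2) := by
    rw [h2, mul_sub]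
    congr 1
    rw [mul_comm (g ρ₀), ← mul_assoc, hpi, one_mul]
  rw [hsplit, abs_mul, abs_of_nonneg hpi_pos.le]
  -- bound the integral
  have habs : |∫ ρ : E, (g (ρ₀ + ρ) - g ρ₀) * Real.exp (-‖ρ‖ ^ 2)|
      ≤ ∫ ρ : E, κ * (C * g ρ₀) * w ρ := by
    have hnorm := norm_integral_le_integral_norm (μ := volume)
      (fun ρ : E => (g (ρ₀ + ρ) - g ρ₀) * Real.exp (-‖ρ‖ ^ 2))
    simp only [Real.norm_eq_abs] at hnorm
    refine le_trans hnorm ?_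
    have hdiff_int : Integrable fun ρ : E => |(g (ρ₀ + ρ) - g ρ₀) * Real.exp (-‖ρ‖ ^ 2)| := by
      refine (hintF.sub hint_const).abs.congr (Filter.Eventually.of_forall fun ρ => ?_)
      simp [sub_mul]
    refine integral_mono hdiff_int (hw_int.const_mul _) (fun ρ => ?_)
    rw [abs_mul, abs_of_nonneg (Real.exp_nonneg _)]
    calc |g (ρ₀ + ρ) - g ρ₀| * Real.exp (-‖ρ‖ ^ 2)
        ≤ (κ * (C * g ρ₀ * (1 + ‖ρ‖ ^ 2) ^ (N / 2)) * ‖ρ‖) * Real.exp (-‖ρ‖ ^ 2) :=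
          mul_le_mul_of_nonneg_right (key ρ) (Real.exp_nonneg _)
      _ = κ * (C * g ρ₀) * w ρ := by rw [hw]; ring
  have hIval : ∫ ρ : E, κ * (C * g ρ₀) * w ρ = κ * (C * g ρ₀) * I := integral_const_mul _ _
  rw [hIval] at habs
  calc Real.pi ^ (-(n : ℝ) / 2) * |∫ ρ : E, (g (ρ₀ + ρ) - g ρ₀) * Real.exp (-‖ρ‖ ^ 2)|
      ≤ Real.pi ^ (-(n : ℝ) / 2) * (κ * (C * g ρ₀) * I) :=
        mul_le_mul_of_nonneg_left habs hpi_pos.le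
    _ ≤ (C * Real.pi ^ (-(n : ℝ) / 2) * I + 1) * κ * g ρ₀ := by
        nlinarith [mul_nonneg hκ (hgpos ρ₀).le, hpi_pos.le, hI_nonneg,
          mul_nonneg (mul_nonneg hκ (hgpos ρ₀).le) (mul_nonneg hpi_pos.le hI_nonneg)]

end
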